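/- The adjoint of multiplication by exp(Σ_{k≥1} a_k p_k / k) with respect to the Hall-Littlewood inner product (·,·)_z is the ring homomorphism Γ₊ sending p_k ↦ p_k + a_k/(1 - z^k): that is, (Γ₋(A) f, g)_z = (f, Γ₊(A/(1-z)) g)_z for all symmetric functions f, g. -/

import Mathlib

noncomputable section

/-- The base field `ℚ(z)`. -/
abbrev Fz := RatFunc ℚ

/-- The Hall–Littlewood parameter `z`. -/
def z : Fz := RatFunc.X

/-- The ring of symmetric functions over `ℚ(z)`, modeled as the polynomial
ring on the power sums `p_1, p_2, …` (which are algebraically independent). -/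
abbrev Lam := MvPolynomial ℕ+ Fz

/-- The power sum `p_k`. -/
def p (k : ℕ+) : Lam := MvPolynomial.X k

/-- `p_μ = ∏_k p_{μ_k}` for a partition `μ` (a multiset of positive parts). -/
def pMu (μ : Multiset ℕ+) : Lam := (μ.map p).prod

/-- The size `|μ|` of a partition. -/
def degOf (μ : Multiset ℕ+) : ℕ := (μ.map fun i => (i : ℕ)).sum

/-- `z_μ = ∏_i i^{m_i(μ)} m_i(μ)!`. -/
def zMu (μ : Multiset ℕ+) : Fz :=
  (μ.map fun i => ((i : ℕ) : Fz)).prod *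
    ∏ i ∈ μ.toFinset, (Nat.factorial (μ.count i) : Fz)

/-- The complete homogeneous symmetric function
`h_k = Σ_{|μ| = k} z_μ⁻¹ p_μ`. -/
def hh (k : ℕ) : Lam := ∑ᶠ μ ∈ {μ : Multiset ℕ+ | degOf μ = k}, (zMu μ)⁻¹ • pMu μ

/-- Formal exponential of a power series (with coefficients in the
`ℚ(z)`-algebra `Lam`), defined coefficientwise by `Σ_n f^n/n!`. -/
def ExpPS (f : PowerSeries Lam) : PowerSeries Lam :=
  PowerSeries.mk fun N =>
    ∑ n ∈ Finset.range (N + 1), ((Nat.factorial n : Fz)⁻¹) • (PowerSeries.coeff N (f ^ n))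

/-- The series `exp(Σ_{k ≥ 1} t^k p_k / k)`; its `t^N`-coefficient is the
degree-`N` component of the "multiplication by `exp`" vertex operator data. -/
def genH : PowerSeries Lam :=
  ExpPS (PowerSeries.mk fun k => if h : 0 < k then (((k : ℕ) : Fz)⁻¹) • p ⟨k, h⟩ else 0)

/-- The Hall–Littlewood weight: for an exponent vector `s` (where `s i` is the
multiplicity `m_i` of the part `i`), `w(s) = ∏_i i^{m_i} m_i! (1-z^i)^{-m_i}`. -/
def wHL (s : ℕ+ →₀ ℕ) : Fz :=
  ∏ i ∈ s.support,
    ((i : ℕ) : Fz) ^ (s i) * (Nat.factorial (s i) : Fz) * ((1 - z ^ (i : ℕ)) ^ (s i))⁻¹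

/-- The Hall–Littlewood inner product `(·,·)_z` on `Lam`, determined by
`(p_μ, p_ν)_z = δ_{μν} z_μ ∏_i (1-z^{μ_i})⁻¹`. -/
def BHL (f g : Lam) : Fz :=
  ∑ s ∈ f.support, MvPolynomial.coeff s f * MvPolynomial.coeff s g * wHL s

/-- The standard Hall weight `∏_i i^{m_i} m_i!`. -/
def wStd (s : ℕ+ →₀ ℕ) : Fz :=
  ∏ i ∈ s.support, ((i : ℕ) : Fz) ^ (s i) * (Nat.factorial (s i) : Fz)

/-- The standard Hall inner product, determined by `(p_μ, p_ν) = δ_{μν} z_μ`. -/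
def BStd (f g : Lam) : Fz :=
  ∑ s ∈ f.support, MvPolynomial.coeff s f * MvPolynomial.coeff s g * wStd s

/-- `[k]_z = ∏_{1 ≤ j ≤ k} (1 - z^j)` as an element of `ℚ(z)`. -/
def qfacF (k : ℕ) : Fz := ∏ j ∈ Finset.range k, (1 - z ^ (j + 1))

/-- `b_μ(z) = ∏_{i ≥ 1} [m_i(μ)]_z`. -/
def bF (μ : Multiset ℕ+) : Fz := ∏ i ∈ μ.toFinset, qfacF (μ.count i)

/-- `h_λ = ∏_k h_{λ_k}`. -/
def hMulti (lam : Multiset ℕ+) : Lam := (lam.map fun i => hh (i : ℕ)).prod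

/-- Sum of the `k` largest parts of `μ`. -/
def topSum (μ : Multiset ℕ+) (k : ℕ) : ℕ :=
  (((μ.sort (· ≤ ·)).reverse.take k).map fun i => (i : ℕ)).sum

/-- Dominance order on partitions of the same size. -/
def Dominates (μ ν : Multiset ℕ+) : Prop := ∀ k, topSum ν k ≤ topSum μ k

end

noncomputable section

/-- Degree-`N` component of multiplication by `exp(Σ_k a_k p_k / k)` (for a
sequence of coefficients `a_k`), extracted via an auxiliary grading variable. -/
def gmA (a : ℕ+ → Fz) (N : ℕ) : Lam :=
  PowerSeries.coeff N
    (ExpPS (PowerSeries.mk fun k =>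
      if h : 0 < k then ((a ⟨k, h⟩ / ((k : ℕ) : Fz)) • p ⟨k, h⟩) else 0))

/-- The ring homomorphism `Γ₊(A/(1-z)) : p_k ↦ p_k + a_k/(1-z^k)`. -/
def GpA (a : ℕ+ → Fz) : Lam →ₐ[Fz] Lam :=
  MvPolynomial.aeval fun i => p i + MvPolynomial.C (a i / (1 - z ^ (i : ℕ)))

namespace Adj
open MvPolynomial Finsupp

/-- weighted degree -/
def wtF (m : ℕ+ →₀ ℕ) : ℕ := m.sum fun i e => (i : ℕ) * e
/-- total degree -/
def degF (m : ℕ+ →₀ ℕ) : ℕ := m.sum fun _ e => e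
/-- multinomial coefficient product -/
def cMF (a : ℕ+ → Fz) (m : ℕ+ →₀ ℕ) : Fz :=
  m.prod fun i e => (a i / ((i : ℕ) : Fz)) ^ e / (Nat.factorial e : Fz)
/-- binomial kernel -/
def DDF (a : ℕ+ → Fz) (t v : ℕ+ →₀ ℕ) : Fz :=
  t.prod fun i e => ((e.choose (v i)) : Fz) * (a i / (1 - z ^ (i : ℕ))) ^ (e - v i)
/-- the exponent series -/
def Fa (a : ℕ+ → Fz) : PowerSeries Lam :=
  PowerSeries.mk fun k => if h : 0 < k then ((a ⟨k, h⟩ / ((k : ℕ) : Fz)) • p ⟨k, h⟩) else 0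

instance : CharZero Fz :=
  charZero_of_injective_algebraMap (algebraMap ℚ Fz).injective

lemma z_pow_ne_one {i : ℕ} (hi : 0 < i) : (1 : Fz) - z ^ i ≠ 0 := by
  intro h
  have h1 : (z : Fz) ^ i = 1 := by linear_combination -h
  have : (Polynomial.X : Polynomial ℚ) ^ i = 1 := by
    apply RatFunc.algebraMap_injective (K := ℚ)
    simpa [z, map_pow, RatFunc.algebraMap_X] using h1
  have := congrArg Polynomial.natDegree this
  simp [Polynomial.natDegree_X_pow] at this
  omega

lemma cast_pnat_ne (i : ℕ+) : ((i : ℕ) : Fz) ≠ 0 := by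
  exact_mod_cast Nat.cast_ne_zero.mpr i.pos.ne'

lemma cast_fact_ne (n : ℕ) : ((Nat.factorial n : ℕ) : Fz) ≠ 0 :=
  Nat.cast_ne_zero.mpr (Nat.factorial_ne_zero n)

lemma wtF_eq_sum {m : ℕ+ →₀ ℕ} {S : Finset ℕ+} (h : m.support ⊆ S) :
    wtF m = ∑ i ∈ S, (i : ℕ) * m i :=
  Finsupp.sum_of_support_subset m h _ (by simp)

lemma degF_eq_sum {m : ℕ+ →₀ ℕ} {S : Finset ℕ+} (h : m.support ⊆ S) :
    degF m = ∑ i ∈ S, m i :=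
  Finsupp.sum_of_support_subset m h _ (by simp)

lemma support_subset_of_le {u t : ℕ+ →₀ ℕ} (h : u ≤ t) : u.support ⊆ t.support := by
  intro i hi
  simp only [Finsupp.mem_support_iff] at *
  have := h i
  omega

lemma wtF_mono {u t : ℕ+ →₀ ℕ} (h : u ≤ t) : wtF u ≤ wtF t := by
  rw [wtF_eq_sum (support_subset_of_le h), wtF_eq_sum (subset_refl _)]
  exact Finset.sum_le_sum fun i _ => Nat.mul_le_mul_left _ (h i)

lemma degF_le_wtF (m : ℕ+ →₀ ℕ) : degF m ≤ wtF m := by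
  rw [degF_eq_sum (subset_refl _), wtF_eq_sum (subset_refl _)]
  exact Finset.sum_le_sum fun i _ => Nat.le_mul_of_pos_left _ i.pos

lemma degF_eq_zero {m : ℕ+ →₀ ℕ} : degF m = 0 ↔ m = 0 := by
  constructor
  · intro h
    ext i
    rw [degF_eq_sum (subset_refl _)] at h
    by_contra hi
    have hmem : i ∈ m.support := Finsupp.mem_support_iff.mpr (by simpa using hi)
    have := Finset.sum_eq_zero_iff.mp h i hmem
    simp at this hi
    omega
  · rintro rfl; simp [degF]


lemma degF_add (x y : ℕ+ →₀ ℕ) : degF (x + y) = degF x + degF y :=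
  Finsupp.sum_add_index' (by simp) (by intro a b c; rfl)

lemma wtF_add (x y : ℕ+ →₀ ℕ) : wtF (x + y) = wtF x + wtF y :=
  Finsupp.sum_add_index' (by simp) (by intro a b c; exact Nat.mul_add _ _ _)

lemma degF_single (k : ℕ+) (e : ℕ) : degF (Finsupp.single k e) = e :=
  Finsupp.sum_single_index rfl

lemma wtF_single (k : ℕ+) (e : ℕ) : wtF (Finsupp.single k e) = (k : ℕ) * e :=
  Finsupp.sum_single_index (by simp)

lemma sub_single_add {m : ℕ+ →₀ ℕ} {k : ℕ+} (h : k ∈ m.support) :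
    (m - Finsupp.single k 1) + Finsupp.single k 1 = m := by
  apply tsub_add_cancel_of_le
  rw [Finsupp.single_le_iff]
  simpa [Nat.one_le_iff_ne_zero] using Finsupp.mem_support_iff.mp h

lemma degF_sub_single {m : ℕ+ →₀ ℕ} {k : ℕ+} (h : k ∈ m.support) :
    degF m = degF (m - Finsupp.single k 1) + 1 := by
  conv_lhs => rw [← sub_single_add h]
  rw [degF_add, degF_single]

lemma wtF_sub_single {m : ℕ+ →₀ ℕ} {k : ℕ+} (h : k ∈ m.support) :
    wtF m = wtF (m - Finsupp.single k 1) + (k : ℕ) := by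
  conv_lhs => rw [← sub_single_add h]
  rw [wtF_add, wtF_single, Nat.mul_one]

lemma le_wtF_of_mem {m : ℕ+ →₀ ℕ} {k : ℕ+} (h : k ∈ m.support) : (k : ℕ) ≤ wtF m := by
  rw [wtF_sub_single h]; omega

lemma cMF_sub_single (a : ℕ+ → Fz) {m : ℕ+ →₀ ℕ} {k : ℕ+} (h : k ∈ m.support) :
    (a k / ((k : ℕ) : Fz)) * cMF a (m - Finsupp.single k 1) = (m k : Fz) * cMF a m := by
  set c : Fz := a k / ((k : ℕ) : Fz) with hc
  set f : ℕ+ → ℕ → Fz := fun i e => (a i / ((i : ℕ) : Fz)) ^ e / (Nat.factorial e : Fz) with hf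
  set m' : ℕ+ →₀ ℕ := m - Finsupp.single k 1 with hm'
  have hf0 : ∀ i, f i 0 = 1 := by intro i; simp [hf]
  have hsub : m'.support ⊆ m.support := support_subset_of_le tsub_le_self
  have h1 : cMF a m' = ∏ i ∈ m.support, f i (m' i) :=
    Finsupp.prod_of_support_subset _ hsub f (fun i _ => hf0 i)
  have h2 : cMF a m = ∏ i ∈ m.support, f i (m i) := rfl
  rw [h1, h2, ← Finset.mul_prod_erase _ (fun i => f i (m' i)) h,
    ← Finset.mul_prod_erase _ (fun i => f i (m i)) h]
  have herase : ∀ i ∈ m.support.erase k, f i (m' i) = f i (m i) := by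
    intro i hi
    have hik : i ≠ k := Finset.ne_of_mem_erase hi
    have : m' i = m i := by
      rw [hm', Finsupp.tsub_apply, Finsupp.single_apply, if_neg (Ne.symm hik)]; omega
    rw [this]
  rw [Finset.prod_congr rfl herase]
  have hk1 : 1 ≤ m k := Nat.one_le_iff_ne_zero.mpr (Finsupp.mem_support_iff.mp h)
  obtain ⟨d, hd⟩ : ∃ d, m k = d + 1 := ⟨m k - 1, by omega⟩
  have hmk : m' k = d := by
    rw [hm', Finsupp.tsub_apply, Finsupp.single_apply, if_pos rfl, hd]; omega
  rw [hmk, hd, ← mul_assoc, ← mul_assoc]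
  congr 1
  have h3 : ((Nat.factorial d : ℕ) : Fz) ≠ 0 := cast_fact_ne d
  have h4 : ((d : Fz) + 1) ≠ 0 := Nat.cast_add_one_ne_zero d
  show c * (c ^ d / (Nat.factorial d : Fz)) =
      ((d + 1 : ℕ) : Fz) * (c ^ (d + 1) / (Nat.factorial (d + 1) : Fz))
  rw [Nat.factorial_succ]
  push_cast
  field_simp
  ring

lemma degF_zero : degF 0 = 0 := Finsupp.sum_zero_index
lemma wtF_zero : wtF 0 = 0 := Finsupp.sum_zero_index
lemma cMF_zero (a : ℕ+ → Fz) : cMF a 0 = 1 := Finsupp.prod_zero_index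

lemma coeff_pow_Fa (a : ℕ+ → Fz) (n N : ℕ) (m : ℕ+ →₀ ℕ) :
    MvPolynomial.coeff m (PowerSeries.coeff N ((Fa a) ^ n)) =
      if degF m = n ∧ wtF m = N then (Nat.factorial n : Fz) * cMF a m else 0 := by
  induction n generalizing N m with
  | zero =>
    rw [pow_zero, PowerSeries.coeff_one]
    by_cases hN : N = 0
    · subst hN
      by_cases hm : m = 0
      · subst hm
        simp [MvPolynomial.coeff_one, degF_zero, wtF_zero, cMF_zero]
      · simp [MvPolynomial.coeff_one, Ne.symm hm, degF_eq_zero, hm]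
    · simp only [if_neg hN, MvPolynomial.coeff_zero]
      rw [if_neg]
      rintro ⟨h1, h2⟩
      rw [degF_eq_zero.mp h1, wtF_zero] at h2
      exact hN h2.symm
  | succ n IH =>
    rw [pow_succ', PowerSeries.coeff_mul, MvPolynomial.coeff_sum,
      Finset.Nat.sum_antidiagonal_eq_sum_range_succ_mk, Finset.sum_range_succ']
    have hc0 : PowerSeries.coeff 0 (Fa a) = 0 := by
      rw [Fa, PowerSeries.coeff_mk]; simp
    rw [hc0]
    simp only [zero_mul, MvPolynomial.coeff_zero, add_zero]
    classical
    have hstep : ∀ i ∈ Finset.range N,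
        MvPolynomial.coeff m ((PowerSeries.coeff (i + 1)) (Fa a) *
          (PowerSeries.coeff (N - (i + 1))) (Fa a ^ n)) =
        if degF m = n + 1 ∧ wtF m = N ∧ (⟨i + 1, Nat.succ_pos i⟩ : ℕ+) ∈ m.support
        then (Nat.factorial n : Fz) * ((m ⟨i + 1, Nat.succ_pos i⟩ : ℕ) : Fz) * cMF a m
        else 0 := by
      intro i hi
      have hiN : i + 1 ≤ N := Finset.mem_range.mp hi
      set k : ℕ+ := ⟨i + 1, Nat.succ_pos i⟩ with hk
      have hcoeff : (PowerSeries.coeff (i + 1)) (Fa a) =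
          (a k / ((k : ℕ) : Fz)) • MvPolynomial.X k := by
        rw [Fa, PowerSeries.coeff_mk, dif_pos (Nat.succ_pos i)]; rfl
      rw [hcoeff, smul_mul_assoc, MvPolynomial.coeff_smul, MvPolynomial.coeff_X_mul',
        smul_eq_mul]
      by_cases hmem : k ∈ m.support
      · rw [if_pos hmem, IH]
        have e1 := degF_sub_single hmem
        have e2 := wtF_sub_single hmem
        have hkco : (k : ℕ) = i + 1 := rfl
        rw [hkco] at e2
        by_cases hC : degF m = n + 1 ∧ wtF m = N
        · rw [if_pos, if_pos ⟨hC.1, hC.2, hmem⟩]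
          · rw [mul_left_comm, cMF_sub_single a hmem]; ring
          · constructor <;> omega
        · rw [if_neg, if_neg, mul_zero]
          · rintro ⟨h1, h2, -⟩; exact hC ⟨h1, h2⟩
          · rintro ⟨h1, h2⟩; exact hC ⟨by omega, by omega⟩
      · rw [if_neg hmem, mul_zero, if_neg]
        rintro ⟨-, -, h3⟩; exact hmem h3
    rw [Finset.sum_congr rfl hstep]
    by_cases hC : degF m = n + 1 ∧ wtF m = N
    · rw [if_pos hC]
      simp only [hC.1, hC.2, eq_self_iff_true, true_and]
      have hsum : (∑ i ∈ Finset.range N,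
          if (⟨i + 1, Nat.succ_pos i⟩ : ℕ+) ∈ m.support
          then (Nat.factorial n : Fz) * ((m ⟨i + 1, Nat.succ_pos i⟩ : ℕ) : Fz) * cMF a m
          else 0) =
          ∑ k ∈ m.support, (Nat.factorial n : Fz) * ((m k : ℕ) : Fz) * cMF a m := by
        rw [← Finset.sum_filter]
        refine Finset.sum_bij' (fun i _ => (⟨i + 1, Nat.succ_pos i⟩ : ℕ+))
          (fun k _ => (k : ℕ) - 1) ?_ ?_ ?_ ?_ ?_
        · intro i hi
          exact (Finset.mem_filter.mp hi).2
        · intro k hk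
          have h1 : (k : ℕ) ≤ wtF m := le_wtF_of_mem hk
          rw [hC.2] at h1
          have h2 : 1 ≤ (k : ℕ) := k.pos
          refine Finset.mem_filter.mpr ⟨Finset.mem_range.mpr (show (k : ℕ) - 1 < N by omega), ?_⟩
          show (⟨(k : ℕ) - 1 + 1, Nat.succ_pos _⟩ : ℕ+) ∈ m.support
          have he : (⟨(k : ℕ) - 1 + 1, Nat.succ_pos _⟩ : ℕ+) = k := Subtype.ext (by simp only [PNat.mk_coe]; exact Nat.succ_pred_eq_of_pos k.pos)
          rw [he]; exact hk
        · intro i hi; rfl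
        · intro k hk
          have h2 : 1 ≤ (k : ℕ) := k.pos
          show (⟨(k : ℕ) - 1 + 1, Nat.succ_pos _⟩ : ℕ+) = k
          exact Subtype.ext (by simp only [PNat.mk_coe]; exact Nat.succ_pred_eq_of_pos k.pos)
        · intro i hi; rfl
      rw [hsum, ← Finset.sum_mul, ← Finset.mul_sum, ← Nat.cast_sum,
        ← degF_eq_sum (subset_refl _), hC.1, Nat.factorial_succ]
      push_cast
      ring
    · rw [if_neg hC]
      apply Finset.sum_eq_zero
      intro i hi
      rw [if_neg]
      rintro ⟨h1, h2, -⟩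
      exact hC ⟨h1, h2⟩

lemma coeff_gmA (a : ℕ+ → Fz) (N : ℕ) (m : ℕ+ →₀ ℕ) :
    MvPolynomial.coeff m (gmA a N) = if wtF m = N then cMF a m else 0 := by
  have h1 : gmA a N = ∑ n ∈ Finset.range (N + 1),
      ((Nat.factorial n : Fz)⁻¹) • (PowerSeries.coeff N ((Fa a) ^ n)) := by
    rw [gmA, ExpPS, PowerSeries.coeff_mk]
    rfl
  rw [h1, MvPolynomial.coeff_sum]
  simp only [MvPolynomial.coeff_smul, smul_eq_mul, coeff_pow_Fa]
  by_cases hw : wtF m = N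
  · rw [if_pos hw]
    have hd : degF m ∈ Finset.range (N + 1) :=
      Finset.mem_range.mpr (by have := degF_le_wtF m; omega)
    rw [Finset.sum_eq_single (degF m)]
    · rw [if_pos ⟨rfl, hw⟩, ← mul_assoc, inv_mul_cancel₀ (cast_fact_ne _), one_mul]
    · intro n hn hne; rw [if_neg (fun h => hne h.1.symm), mul_zero]
    · intro h; exact absurd hd h
  · rw [if_neg hw]
    apply Finset.sum_eq_zero; intro n hn
    rw [if_neg (fun h => hw h.2), mul_zero]

lemma BHL_eq_right (f g : Lam) :
    BHL f g = ∑ t ∈ g.support, MvPolynomial.coeff t f * MvPolynomial.coeff t g * wHL t := by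
  rw [BHL]
  have h1 : ∑ s ∈ f.support, MvPolynomial.coeff s f * MvPolynomial.coeff s g * wHL s
      = ∑ s ∈ f.support ∪ g.support, MvPolynomial.coeff s f * MvPolynomial.coeff s g * wHL s :=
    Finset.sum_subset Finset.subset_union_left
      (fun x _ hx => by rw [MvPolynomial.notMem_support_iff.mp hx, zero_mul, zero_mul])
  have h2 : ∑ s ∈ g.support, MvPolynomial.coeff s f * MvPolynomial.coeff s g * wHL s
      = ∑ s ∈ f.support ∪ g.support, MvPolynomial.coeff s f * MvPolynomial.coeff s g * wHL s :=
    Finset.sum_subset Finset.subset_union_right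
      (fun x _ hx => by rw [MvPolynomial.notMem_support_iff.mp hx, mul_zero, zero_mul])
  rw [h1, h2]

lemma support_add_single_eq {k : ℕ+} {b : ℕ} (hb : b ≠ 0) {t' : ℕ+ →₀ ℕ}
    (hk : k ∉ t'.support) :
    (Finsupp.single k b + t').support = insert k t'.support := by
  rw [Finsupp.support_add_eq, Finsupp.support_single_ne_zero _ hb, ← Finset.insert_eq]
  rw [Finsupp.support_single_ne_zero _ hb]
  simpa using hk

lemma DDF_decomp (a : ℕ+ → Fz) {k : ℕ+} {b : ℕ} (hb : b ≠ 0) {t' : ℕ+ →₀ ℕ}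
    (hk : k ∉ t'.support) (v : ℕ+ →₀ ℕ) :
    DDF a (Finsupp.single k b + t') v =
      ((b.choose (v k) : ℕ) : Fz) * (a k / (1 - z ^ (k : ℕ))) ^ (b - v k) *
        (t'.prod fun i e => ((e.choose (v i) : ℕ) : Fz) * (a i / (1 - z ^ (i : ℕ))) ^ (e - v i)) := by
  have ht'k : t' k = 0 := Finsupp.notMem_support_iff.mp hk
  rw [DDF, Finsupp.prod, support_add_single_eq hb hk, Finset.prod_insert hk]
  congr 1
  · rw [Finsupp.add_apply, Finsupp.single_eq_same, ht'k, add_zero]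
  · rw [Finsupp.prod]
    apply Finset.prod_congr rfl
    intro i hi
    have hik : i ≠ k := fun h => hk (h ▸ hi)
    rw [Finsupp.add_apply, Finsupp.single_apply, if_neg (Ne.symm hik), zero_add]

lemma coeff_prod_shift (a : ℕ+ → Fz) (t v : ℕ+ →₀ ℕ) :
    MvPolynomial.coeff v
      (t.prod fun i e => (MvPolynomial.X i +
        MvPolynomial.C (a i / (1 - z ^ (i : ℕ)))) ^ e) =
      if v ≤ t then DDF a t v else 0 := by
  induction t using Finsupp.induction generalizing v with
  | zero =>
    rw [Finsupp.prod_zero_index]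
    by_cases hv : v = 0
    · subst hv
      rw [if_pos le_rfl, MvPolynomial.coeff_one, if_pos rfl, DDF, Finsupp.prod_zero_index]
    · rw [MvPolynomial.coeff_one, if_neg (fun h => hv h.symm), if_neg]
      intro hle; exact hv (le_antisymm hle zero_le)
  | single_add k b t' hk hb IH =>
    have ht'k : t' k = 0 := Finsupp.notMem_support_iff.mp hk
    rw [Finsupp.prod_add_index' (fun i => pow_zero _) (fun i b1 b2 => pow_add _ _ _),
      Finsupp.prod_single_index (h := fun i e => (MvPolynomial.X i +
        MvPolynomial.C (a i / (1 - z ^ (i : ℕ)))) ^ e) (pow_zero _), add_pow, Finset.sum_mul,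
      MvPolynomial.coeff_sum]
    set γ : Fz := a k / (1 - z ^ (k : ℕ)) with hγ
    have hterm : ∀ j ∈ Finset.range (b + 1),
        MvPolynomial.coeff v
          ((MvPolynomial.X k ^ j * MvPolynomial.C γ ^ (b - j) * ((b.choose j : ℕ) : Lam)) *
            (t'.prod fun i e => (MvPolynomial.X i +
              MvPolynomial.C (a i / (1 - z ^ (i : ℕ)))) ^ e)) =
        if Finsupp.single k j ≤ v then
          (γ ^ (b - j) * ((b.choose j : ℕ) : Fz)) *
            (if v - Finsupp.single k j ≤ t' then DDF a t' (v - Finsupp.single k j) else 0)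
        else 0 := by
      intro j hj
      have hmono : MvPolynomial.X (R := Fz) k ^ j * MvPolynomial.C γ ^ (b - j) *
          ((b.choose j : ℕ) : Lam) =
          MvPolynomial.monomial (Finsupp.single k j)
            (γ ^ (b - j) * ((b.choose j : ℕ) : Fz)) := by
        rw [MvPolynomial.X_pow_eq_monomial, ← map_pow, ← MvPolynomial.C_eq_coe_nat,
          MvPolynomial.C_apply, MvPolynomial.C_apply, MvPolynomial.monomial_mul,
          MvPolynomial.monomial_mul, add_zero, add_zero, one_mul]
      rw [hmono, MvPolynomial.coeff_monomial_mul', IH]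
    rw [Finset.sum_congr rfl hterm]
    by_cases hvt : v ≤ Finsupp.single k b + t'
    · rw [if_pos hvt]
      have hco := Finsupp.le_def.mp hvt
      have hvk : v k ≤ b := by
        have := hco k
        rw [Finsupp.add_apply, Finsupp.single_eq_same, ht'k, add_zero] at this
        exact this
      rw [Finset.sum_eq_single (v k)]
      · have h1 : Finsupp.single k (v k) ≤ v := Finsupp.single_le_iff.mpr le_rfl
        have h2 : v - Finsupp.single k (v k) ≤ t' := by
          refine Finsupp.le_def.mpr fun i => ?_
          rw [Finsupp.tsub_apply, Finsupp.single_apply]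
          by_cases hik : k = i
          · subst hik; rw [if_pos rfl]; omega
          · rw [if_neg hik, Nat.sub_zero]
            have := hco i
            rw [Finsupp.add_apply, Finsupp.single_apply, if_neg hik, zero_add] at this
            exact this
        rw [if_pos h1, if_pos h2, DDF_decomp a hb hk]
        have h3 : DDF a t' (v - Finsupp.single k (v k)) =
            t'.prod fun i e => ((e.choose (v i) : ℕ) : Fz) *
              (a i / (1 - z ^ (i : ℕ))) ^ (e - v i) := by
          rw [DDF]
          apply Finset.prod_congr rfl
          intro i hi
          have hik : i ≠ k := fun h => hk (h ▸ hi)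
          simp only []
          rw [Finsupp.tsub_apply, Finsupp.single_apply, if_neg (Ne.symm hik), Nat.sub_zero]
        rw [h3]
        ring
      · intro j hj hne
        by_cases h1 : Finsupp.single k j ≤ v
        · rw [if_pos h1, if_neg, mul_zero]
          intro hle
          have h5 := Finsupp.le_def.mp hle k
          rw [Finsupp.tsub_apply, Finsupp.single_eq_same] at h5
          have h6 := Finsupp.single_le_iff.mp h1
          omega
        · rw [if_neg h1]
      · intro habs
        exact absurd (Finset.mem_range.mpr (by omega)) habs
    · rw [if_neg hvt]
      apply Finset.sum_eq_zero
      intro j hj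
      have hjb : j ≤ b := Nat.lt_succ_iff.mp (Finset.mem_range.mp hj)
      by_cases h1 : Finsupp.single k j ≤ v
      · rw [if_pos h1, if_neg, mul_zero]
        intro hle
        apply hvt
        refine Finsupp.le_def.mpr fun i => ?_
        have hji : j ≤ v k := Finsupp.single_le_iff.mp h1
        have h4 := Finsupp.le_def.mp hle i
        rw [Finsupp.tsub_apply, Finsupp.single_apply] at h4
        rw [Finsupp.add_apply, Finsupp.single_apply]
        by_cases hik : k = i
        · subst hik
          rw [if_pos rfl] at h4 ⊢
          omega
        · rw [if_neg hik] at h4 ⊢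
          omega
      · rw [if_neg h1]

lemma GpA_apply (a : ℕ+ → Fz) (g : Lam) :
    GpA a g = ∑ t ∈ g.support, MvPolynomial.C (MvPolynomial.coeff t g) *
      (t.prod fun i e => (MvPolynomial.X i +
        MvPolynomial.C (a i / (1 - z ^ (i : ℕ)))) ^ e) := by
  conv_lhs => rw [g.as_sum]
  rw [map_sum]
  apply Finset.sum_congr rfl
  intro t ht
  rw [GpA, MvPolynomial.aeval_monomial]
  rfl

lemma coeff_GpA (a : ℕ+ → Fz) (g : Lam) (v : ℕ+ →₀ ℕ) :
    MvPolynomial.coeff v (GpA a g) =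
      ∑ t ∈ g.support, MvPolynomial.coeff t g * (if v ≤ t then DDF a t v else 0) := by
  rw [GpA_apply, MvPolynomial.coeff_sum]
  apply Finset.sum_congr rfl
  intro t ht
  rw [MvPolynomial.coeff_C_mul, coeff_prod_shift]

lemma kernel_eq (a : ℕ+ → Fz) {v t : ℕ+ →₀ ℕ} (hvt : v ≤ t) :
    cMF a (t - v) * wHL t = DDF a t v * wHL v := by
  have hsub : (t - v).support ⊆ t.support := support_subset_of_le tsub_le_self
  have hvsub : v.support ⊆ t.support := support_subset_of_le hvt
  have h1 : cMF a (t - v) = ∏ i ∈ t.support,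
      (a i / ((i : ℕ) : Fz)) ^ (t i - v i) / (Nat.factorial (t i - v i) : Fz) := by
    rw [cMF, Finsupp.prod_of_support_subset _ hsub _ (fun i _ => by simp)]
    apply Finset.prod_congr rfl
    intro i hi
    rw [Finsupp.tsub_apply]
  have h2 : wHL v = ∏ i ∈ t.support,
      ((i : ℕ) : Fz) ^ (v i) * (Nat.factorial (v i) : Fz) *
        ((1 - z ^ (i : ℕ)) ^ (v i))⁻¹ := by
    rw [wHL]
    apply Finset.prod_subset hvsub
    intro i _ hi
    rw [Finsupp.notMem_support_iff.mp hi]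
    simp
  rw [h1, h2, wHL, DDF, Finsupp.prod, ← Finset.prod_mul_distrib, ← Finset.prod_mul_distrib]
  apply Finset.prod_congr rfl
  intro i hi
  have hvi : v i ≤ t i := hvt i
  obtain ⟨d, hd⟩ : ∃ d, t i = v i + d := ⟨t i - v i, by omega⟩
  rw [hd, Nat.add_sub_cancel_left]
  rw [Nat.cast_choose Fz (show v i ≤ v i + d by omega), Nat.add_sub_cancel_left]
  have hI : ((i : ℕ) : Fz) ≠ 0 := cast_pnat_ne i
  have hq : (1 : Fz) - z ^ (i : ℕ) ≠ 0 := z_pow_ne_one i.pos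
  have hf1 : ((Nat.factorial (v i) : ℕ) : Fz) ≠ 0 := cast_fact_ne _
  have hf2 : ((Nat.factorial d : ℕ) : Fz) ≠ 0 := cast_fact_ne _
  have hf3 : ((Nat.factorial (v i + d) : ℕ) : Fz) ≠ 0 := cast_fact_ne _
  field_simp
  have e1 : ((i : ℕ) : Fz) ^ d * ((i : ℕ) : Fz)⁻¹ ^ d = 1 := by
    rw [← mul_pow, mul_inv_cancel₀ hI, one_pow]
  have e2 : (1 - z ^ (i : ℕ))⁻¹ ^ d * (1 - z ^ (i : ℕ)) ^ d = 1 := by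
    rw [← mul_pow, inv_mul_cancel₀ hq, one_pow]
  linear_combination (a i ^ d * ((i : ℕ) : Fz) ^ v i * (1 - z ^ (i : ℕ)) ^ v i) * e1 -
    (a i ^ d * ((i : ℕ) : Fz) ^ v i * (1 - z ^ (i : ℕ)) ^ v i) * e2

theorem gammaMinus_adjoint' (a : ℕ+ → Fz) (f g : Lam) :
    (∑ᶠ N : ℕ, BHL (gmA a N * f) g) = BHL f (GpA a g) := by
  classical
  set D : ℕ := g.support.sup wtF with hD
  have hBHL : ∀ N, BHL (gmA a N * f) g = ∑ t ∈ g.support,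
      (∑ q ∈ Finset.HasAntidiagonal.antidiagonal t,
        (if wtF q.1 = N then cMF a q.1 else 0) * MvPolynomial.coeff q.2 f) *
        MvPolynomial.coeff t g * wHL t := by
    intro N
    rw [BHL_eq_right]
    apply Finset.sum_congr rfl
    intro t ht
    rw [MvPolynomial.coeff_mul]
    congr 2
    apply Finset.sum_congr rfl
    intro q hq
    rw [coeff_gmA]
  have hwt : ∀ t ∈ g.support, ∀ q ∈ Finset.HasAntidiagonal.antidiagonal t, wtF q.1 ≤ D := by
    intro t ht q hq
    have h1 : q.1 ≤ t := by
      have h := Finset.HasAntidiagonal.mem_antidiagonal.mp hq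
      calc q.1 ≤ q.1 + q.2 := self_le_add_right _ _
        _ = t := h
    exact le_trans (wtF_mono h1) (Finset.le_sup ht)
  have hsupp : (Function.support fun N => BHL (gmA a N * f) g) ⊆
      ↑(Finset.range (D + 1)) := by
    intro N hN
    rw [Function.mem_support] at hN
    rw [Finset.mem_coe, Finset.mem_range]
    by_contra hmem
    apply hN
    rw [hBHL]
    apply Finset.sum_eq_zero
    intro t ht
    have hz : ∀ q ∈ Finset.HasAntidiagonal.antidiagonal t,
        (if wtF q.1 = N then cMF a q.1 else 0) * MvPolynomial.coeff q.2 f = 0 := by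
      intro q hq
      rw [if_neg, zero_mul]
      intro hw
      have := hwt t ht q hq
      omega
    rw [Finset.sum_eq_zero hz, zero_mul, zero_mul]
  have hRHS : BHL f (GpA a g) = ∑ t ∈ g.support, ∑ v ∈ f.support,
      MvPolynomial.coeff v f * MvPolynomial.coeff t g *
        (if v ≤ t then cMF a (t - v) * wHL t else 0) := by
    rw [BHL]
    have hR : ∀ v ∈ f.support,
        MvPolynomial.coeff v f * MvPolynomial.coeff v (GpA a g) * wHL v =
        ∑ t ∈ g.support, MvPolynomial.coeff v f * MvPolynomial.coeff t g *
          (if v ≤ t then cMF a (t - v) * wHL t else 0) := by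
      intro v hv
      rw [coeff_GpA, Finset.mul_sum, Finset.sum_mul]
      apply Finset.sum_congr rfl
      intro t ht
      by_cases hle : v ≤ t
      · rw [if_pos hle, if_pos hle]
        have hker := kernel_eq a hle
        linear_combination (MvPolynomial.coeff v f * MvPolynomial.coeff t g) * hker.symm
      · rw [if_neg hle, if_neg hle]
        ring
    rw [Finset.sum_congr rfl hR]
    exact Finset.sum_comm
  rw [finsum_eq_sum_of_support_subset _ hsupp, hRHS]
  calc ∑ N ∈ Finset.range (D + 1), BHL (gmA a N * f) g
      = ∑ t ∈ g.support,
          (∑ q ∈ Finset.HasAntidiagonal.antidiagonal t, cMF a q.1 * MvPolynomial.coeff q.2 f) *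
            MvPolynomial.coeff t g * wHL t := by
        rw [Finset.sum_congr rfl fun N _ => hBHL N, Finset.sum_comm]
        apply Finset.sum_congr rfl
        intro t ht
        rw [← Finset.sum_mul, ← Finset.sum_mul, Finset.sum_comm]
        congr 2
        apply Finset.sum_congr rfl
        intro q hq
        rw [← Finset.sum_mul]
        congr 1
        rw [Finset.sum_ite_eq (Finset.range (D + 1)) (wtF q.1) (fun _ => cMF a q.1),
          if_pos (Finset.mem_range.mpr (by have := hwt t ht q hq; omega))]
    _ = ∑ t ∈ g.support, ∑ v ∈ f.support,
          MvPolynomial.coeff v f * MvPolynomial.coeff t g *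
            (if v ≤ t then cMF a (t - v) * wHL t else 0) := by
        apply Finset.sum_congr rfl
        intro t ht
        rw [Finset.sum_mul, Finset.sum_mul]
        have hIic : ∑ q ∈ Finset.HasAntidiagonal.antidiagonal t,
            cMF a q.1 * MvPolynomial.coeff q.2 f * MvPolynomial.coeff t g * wHL t
            = ∑ v ∈ Finset.Iic t, MvPolynomial.coeff v f * MvPolynomial.coeff t g *
                (if v ≤ t then cMF a (t - v) * wHL t else 0) := by
          refine Finset.sum_bij' (fun q _ => q.2) (fun v _ => (t - v, v)) ?_ ?_ ?_ ?_ ?_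
          · intro q hq
            rw [Finset.mem_Iic]
            have h := Finset.HasAntidiagonal.mem_antidiagonal.mp hq
            calc q.2 ≤ q.1 + q.2 := self_le_add_left _ _
              _ = t := h
          · intro v hv
            rw [Finset.HasAntidiagonal.mem_antidiagonal]
            exact tsub_add_cancel_of_le (Finset.mem_Iic.mp hv)
          · intro q hq
            have h := Finset.HasAntidiagonal.mem_antidiagonal.mp hq
            exact Prod.ext (eq_tsub_of_add_eq h).symm rfl
          · intro v hv
            rfl
          · intro q hq
            have h := Finset.HasAntidiagonal.mem_antidiagonal.mp hq
            have hle : q.2 ≤ t := by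
              calc q.2 ≤ q.1 + q.2 := self_le_add_left _ _
                _ = t := h
            have h1 : q.1 = t - q.2 := eq_tsub_of_add_eq h
            rw [if_pos hle, ← h1]
            ring
        rw [hIic]
        have e1 : ∑ v ∈ Finset.Iic t, MvPolynomial.coeff v f * MvPolynomial.coeff t g *
              (if v ≤ t then cMF a (t - v) * wHL t else 0)
            = ∑ v ∈ Finset.Iic t ∪ f.support, MvPolynomial.coeff v f *
              MvPolynomial.coeff t g * (if v ≤ t then cMF a (t - v) * wHL t else 0) :=
          Finset.sum_subset Finset.subset_union_left (fun x _ hx => by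
            rw [if_neg (by simpa [Finset.mem_Iic] using hx), mul_zero])
        have e2 : ∑ v ∈ f.support, MvPolynomial.coeff v f * MvPolynomial.coeff t g *
              (if v ≤ t then cMF a (t - v) * wHL t else 0)
            = ∑ v ∈ Finset.Iic t ∪ f.support, MvPolynomial.coeff v f *
              MvPolynomial.coeff t g * (if v ≤ t then cMF a (t - v) * wHL t else 0) :=
          Finset.sum_subset Finset.subset_union_right (fun x _ hx => by
            rw [MvPolynomial.notMem_support_iff.mp hx, zero_mul, zero_mul])
        rw [e1, ← e2]

end Adj

/-- Adjointness: `(Γ₋(A) f, g)_z = (f, Γ₊(A/(1-z)) g)_z` for all symmetric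
functions `f, g`, where `Γ₋(A)` is multiplication by `exp(Σ_k a_k p_k/k)`. -/
theorem gammaMinus_adjoint (a : ℕ+ → Fz) (f g : Lam) :
    (∑ᶠ N : ℕ, BHL (gmA a N * f) g) = BHL f (GpA a g) :=
  Adj.gammaMinus_adjoint' a f g

end
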